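/- Let φ : [α₁,α₂] → [β₁,β₂] be a continuous strictly increasing bijection with inverse ψ : [β₁,β₂] → [α₁,α₂], and define F(a,b) = ∫_{α₁}^{a} φ(x) dx + ∫_{β₁}^{b} ψ(x) dx − a·b + α₁·β₁. Then for every a ∈ [α₁,α₂] and b ∈ [β₁,β₂] one has 0 ≤ F(a,b) ≤ −(ψ(b) − a)·(φ(a) − b). -/

import Mathlib

open Set intervalIntegral

theorem young_inequality_with_upper_bound
    (α₁ α₂ β₁ β₂ : ℝ) (φ ψ : ℝ → ℝ)
    (hα : α₁ < α₂) (hβ : β₁ < β₂)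
    (hcont : ContinuousOn φ (Icc α₁ α₂))
    (hmono : StrictMonoOn φ (Icc α₁ α₂))
    (hbij : BijOn φ (Icc α₁ α₂) (Icc β₁ β₂))
    (hinvL : ∀ x ∈ Icc α₁ α₂, ψ (φ x) = x)
    (hinvR : ∀ y ∈ Icc β₁ β₂, φ (ψ y) = y)
    (hψmaps : MapsTo ψ (Icc β₁ β₂) (Icc α₁ α₂))
    (a b : ℝ) (ha : a ∈ Icc α₁ α₂) (hb : b ∈ Icc β₁ β₂) :
    0 ≤ (∫ x in α₁..a, φ x) + (∫ x in β₁..b, ψ x) - a * b + α₁ * β₁ ∧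
    (∫ x in α₁..a, φ x) + (∫ x in β₁..b, ψ x) - a * b + α₁ * β₁
      ≤ -(ψ b - a) * (φ a - b) := by
  have hφmaps : MapsTo φ (Icc α₁ α₂) (Icc β₁ β₂) := hbij.mapsTo
  -- ψ is monotone on Icc β₁ β₂
  have hψmono : MonotoneOn ψ (Icc β₁ β₂) := by
    intro y₁ hy₁ y₂ hy₂ h
    by_contra hlt
    push_neg at hlt
    have := hmono (hψmaps hy₂) (hψmaps hy₁) hlt
    rw [hinvR _ hy₁, hinvR _ hy₂] at this
    linarith
  have hφα₁ : φ α₁ = β₁ := by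
    obtain ⟨x, hx, hfx⟩ := hbij.surjOn (show β₁ ∈ Icc β₁ β₂ from ⟨le_refl _, hβ.le⟩)
    have h1 : φ α₁ ≤ φ x := by
      rcases eq_or_lt_of_le hx.1 with h | h
      · rw [h]
      · exact (hmono ⟨le_refl _, hα.le⟩ hx h).le
    have h2 := (hφmaps ⟨le_refl _, hα.le⟩).1
    rw [hfx] at h1
    linarith
  have hφmono : MonotoneOn φ (Icc α₁ α₂) := hmono.monotoneOn
  -- integrability helpers
  have hφint : ∀ u v, u ∈ Icc α₁ α₂ → v ∈ Icc α₁ α₂ → IntervalIntegrable φ MeasureTheory.volume u v := by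
    intro u v hu hv
    exact (hcont.mono (uIcc_subset_Icc hu hv)).intervalIntegrable
  have hψint : ∀ u v, u ∈ Icc β₁ β₂ → v ∈ Icc β₁ β₂ → IntervalIntegrable ψ MeasureTheory.volume u v := by
    intro u v hu hv
    exact (hψmono.mono (uIcc_subset_Icc hu hv)).intervalIntegrable
  -- the step estimate
  set H : ℝ → ℝ := fun u => (∫ x in α₁..u, φ x) + (∫ y in β₁..(φ u), ψ y) - u * φ u with hH
  have hstep : ∀ s t, s ∈ Icc α₁ α₂ → t ∈ Icc α₁ α₂ → s ≤ t →
      |H t - H s| ≤ (t - s) * (φ t - φ s) := by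
    intro s t hs ht hst
    have hφst : φ s ≤ φ t := hφmono hs ht hst
    have hφs := hφmaps hs
    have hφt := hφmaps ht
    have e1 : (∫ x in α₁..t, φ x) - (∫ x in α₁..s, φ x) = ∫ x in s..t, φ x := by
      rw [← intervalIntegral.integral_add_adjacent_intervals
        (hφint α₁ s ⟨le_refl _, hα.le⟩ hs) (hφint s t hs ht)]
      ring
    have e2 : (∫ y in β₁..(φ t), ψ y) - (∫ y in β₁..(φ s), ψ y) = ∫ y in (φ s)..(φ t), ψ y := by
      rw [← intervalIntegral.integral_add_adjacent_intervals
        (hψint β₁ (φ s) ⟨le_refl _, hβ.le⟩ hφs) (hψint (φ s) (φ t) hφs hφt)]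
      ring
    have hHdiff : H t - H s = (∫ x in s..t, φ x) + (∫ y in (φ s)..(φ t), ψ y) - (t * φ t - s * φ s) := by
      simp only [hH]; linarith [e1, e2]
    -- bounds for ∫ φ
    have hsub1 : Icc s t ⊆ Icc α₁ α₂ := Icc_subset_Icc hs.1 ht.2
    have hI1low : φ s * (t - s) ≤ ∫ x in s..t, φ x := by
      have := intervalIntegral.integral_mono_on hst (_root_.intervalIntegrable_const (c := φ s))
        (hφint s t hs ht) (fun x hx => hφmono hs (hsub1 hx) hx.1)
      simpa [mul_comm] using this
    have hI1high : (∫ x in s..t, φ x) ≤ φ t * (t - s) := by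
      have := intervalIntegral.integral_mono_on hst (hφint s t hs ht)
        (_root_.intervalIntegrable_const (c := φ t)) (fun x hx => hφmono (hsub1 hx) ht hx.2)
      simpa [mul_comm] using this
    -- bounds for ∫ ψ
    have hsub2 : Icc (φ s) (φ t) ⊆ Icc β₁ β₂ := Icc_subset_Icc hφs.1 hφt.2
    have hI2low : s * (φ t - φ s) ≤ ∫ y in (φ s)..(φ t), ψ y := by
      have := intervalIntegral.integral_mono_on hφst (_root_.intervalIntegrable_const (c := s))
        (hψint (φ s) (φ t) hφs hφt)
        (fun y hy => by
          have := hψmono hφs (hsub2 hy) hy.1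
          rwa [hinvL s hs] at this)
      simpa [mul_comm] using this
    have hI2high : (∫ y in (φ s)..(φ t), ψ y) ≤ t * (φ t - φ s) := by
      have := intervalIntegral.integral_mono_on hφst (hψint (φ s) (φ t) hφs hφt)
        (_root_.intervalIntegrable_const (c := t))
        (fun y hy => by
          have := hψmono (hsub2 hy) hφt hy.2
          rwa [hinvL t ht] at this)
      simpa [mul_comm] using this
    rw [hHdiff, abs_le]
    constructor <;> nlinarith
  -- the identity : H t = -(α₁ * β₁) on Icc α₁ α₂
  have hHα₁ : H α₁ = -(α₁ * β₁) := by
    simp [hH, hφα₁]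
  have hident : ∀ t ∈ Icc α₁ α₂, H t = -(α₁ * β₁) := by
    intro t ht
    have key : ∀ n : ℕ, 0 < n → |H t - H α₁| ≤ ((t - α₁) * (β₂ - β₁)) / n := by
      intro n hn
      set d : ℝ := (t - α₁) / n with hd
      have hd0 : 0 ≤ d := div_nonneg (by linarith [ht.1]) (Nat.cast_nonneg n)
      set x : ℕ → ℝ := fun i => α₁ + i * d with hx
      have hx0 : x 0 = α₁ := by simp [hx]
      have hxn : x n = t := by
        simp only [hx, hd]
        field_simp
        ring
      have hxmono : ∀ i j : ℕ, i ≤ j → x i ≤ x j := by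
        intro i j hij
        simp only [hx]
        have : (i : ℝ) ≤ j := Nat.cast_le.mpr hij
        nlinarith
      have hxmem : ∀ i : ℕ, i ≤ n → x i ∈ Icc α₁ α₂ := by
        intro i hi
        constructor
        · simp only [hx]; nlinarith [Nat.cast_nonneg (α := ℝ) i]
        · have := hxmono i n hi
          rw [hxn] at this
          linarith [ht.2]
      have hxd : ∀ i : ℕ, x (i + 1) - x i = d := by
        intro i
        simp only [hx]
        push_cast
        ring
      have tele : H t - H α₁ = ∑ i ∈ Finset.range n, (H (x (i + 1)) - H (x i)) := by
        rw [Finset.sum_range_sub (fun i => H (x i)), hx0, hxn]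
      have teleφ : ∑ i ∈ Finset.range n, (φ (x (i + 1)) - φ (x i)) = φ t - φ α₁ := by
        rw [Finset.sum_range_sub (fun i => φ (x i)), hx0, hxn]
      calc |H t - H α₁| ≤ ∑ i ∈ Finset.range n, |H (x (i + 1)) - H (x i)| := by
            rw [tele]; exact Finset.abs_sum_le_sum_abs _ _
        _ ≤ ∑ i ∈ Finset.range n, d * (φ (x (i + 1)) - φ (x i)) := by
            apply Finset.sum_le_sum
            intro i hi
            have hi' := Finset.mem_range.mp hi
            have := hstep (x i) (x (i + 1)) (hxmem i hi'.le) (hxmem (i + 1) hi')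
              (hxmono i (i + 1) (Nat.le_succ i))
            rwa [hxd i] at this
        _ = d * (φ t - φ α₁) := by rw [← Finset.mul_sum, teleφ]
        _ ≤ ((t - α₁) * (β₂ - β₁)) / n := by
            rw [hφα₁]
            have h1 : φ t ≤ β₂ := (hφmaps ht).2
            have h2 : β₁ ≤ φ t := (hφmaps ht).1
            rw [hd, div_mul_eq_mul_div]
            gcongr
            linarith [ht.1]
    have habs : |H t - H α₁| = 0 := by
      by_contra h
      have hpos : 0 < |H t - H α₁| := lt_of_le_of_ne (abs_nonneg _) (Ne.symm h)
      obtain ⟨n, hn⟩ := exists_nat_gt (((t - α₁) * (β₂ - β₁)) / |H t - H α₁|)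
      have hn0 : 0 < n := by
        have : (0 : ℝ) ≤ ((t - α₁) * (β₂ - β₁)) / |H t - H α₁| :=
          div_nonneg (mul_nonneg (by linarith [ht.1]) (by linarith)) hpos.le
        exact_mod_cast lt_of_le_of_lt this hn
      have := key n hn0
      have hnR : (0:ℝ) < n := by exact_mod_cast hn0
      rw [div_lt_iff₀ hpos] at hn
      rw [le_div_iff₀ hnR] at this
      nlinarith
    rw [abs_eq_zero, sub_eq_zero] at habs
    rw [habs, hHα₁]
  -- now the main statement
  have hida := hident a ha
  have hfa := hφmaps ha
  have hsplit : (∫ x in β₁..b, ψ x) = (∫ x in β₁..(φ a), ψ x) + ∫ x in (φ a)..b, ψ x := by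
    rw [intervalIntegral.integral_add_adjacent_intervals
      (hψint β₁ (φ a) ⟨le_refl _, hβ.le⟩ hfa) (hψint (φ a) b hfa hb)]
  have hFa : (∫ x in α₁..a, φ x) + (∫ x in β₁..b, ψ x) - a * b + α₁ * β₁
      = (∫ x in (φ a)..b, ψ x) - a * (b - φ a) := by
    simp only [hH] at hida
    rw [hsplit]
    linarith
  have hψφa : ψ (φ a) = a := hinvL a ha
  rcases le_total (φ a) b with hcase | hcase
  · -- φ a ≤ b
    have hsub : Icc (φ a) b ⊆ Icc β₁ β₂ := Icc_subset_Icc hfa.1 hb.2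
    have hlow : a * (b - φ a) ≤ ∫ x in (φ a)..b, ψ x := by
      have := intervalIntegral.integral_mono_on hcase (_root_.intervalIntegrable_const (c := a))
        (hψint (φ a) b hfa hb)
        (fun y hy => by
          have := hψmono hfa (hsub hy) hy.1
          rwa [hψφa] at this)
      simpa [mul_comm] using this
    have hhigh : (∫ x in (φ a)..b, ψ x) ≤ ψ b * (b - φ a) := by
      have := intervalIntegral.integral_mono_on hcase (hψint (φ a) b hfa hb)
        (_root_.intervalIntegrable_const (c := ψ b))
        (fun y hy => hψmono (hsub hy) hb hy.2)
      simpa [mul_comm] using this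
    constructor
    · rw [hFa]; linarith
    · rw [hFa]; nlinarith
  · -- b ≤ φ a
    have hsub : Icc b (φ a) ⊆ Icc β₁ β₂ := Icc_subset_Icc hb.1 hfa.2
    have hrev : (∫ x in (φ a)..b, ψ x) = -∫ x in b..(φ a), ψ x :=
      intervalIntegral.integral_symm b (φ a)
    have hlow : ψ b * (φ a - b) ≤ ∫ x in b..(φ a), ψ x := by
      have := intervalIntegral.integral_mono_on hcase (_root_.intervalIntegrable_const (c := ψ b))
        (hψint b (φ a) hb hfa) (fun y hy => hψmono hb (hsub hy) hy.1)
      simpa [mul_comm] using this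
    have hhigh : (∫ x in b..(φ a), ψ x) ≤ a * (φ a - b) := by
      have := intervalIntegral.integral_mono_on hcase (hψint b (φ a) hb hfa)
        (_root_.intervalIntegrable_const (c := a))
        (fun y hy => by
          have := hψmono (hsub hy) hfa hy.2
          rwa [hψφa] at this)
      simpa [mul_comm] using this
    constructor
    · rw [hFa, hrev]; linarith
    · rw [hFa, hrev]; nlinarith
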